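/- Let ρ = 1−δ+iγ with 0 ≤ δ ≤ 1, and let X₁ ≥ 1, |γ|/X₁ ≤ |η| ≤ 1/2. Then T_ρ(η) = Σ_{X₁ < n ≤ X} n^{ρ−1} e(nη) satisfies |T_ρ(η)| ≪ X₁^{-δ}|η|^{-1} ≤ |η|^{-1}, with an absolute implied constant. -/

import Mathlib

open Complex

/-- e(u) = e^{2πiu}. -/
noncomputable def e (u : ℝ) : ℂ := Complex.exp (2 * Real.pi * Complex.I * u)

lemma e_eq (u : ℝ) : e u = Complex.exp ((2 * Real.pi * u : ℝ) * Complex.I) := by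
  simp [e]; ring_nf

lemma e_re (u : ℝ) : (e u).re = Real.cos (2 * (Real.pi * u)) := by
  rw [e_eq, Complex.exp_ofReal_mul_I_re]; ring_nf

lemma e_im (u : ℝ) : (e u).im = Real.sin (2 * (Real.pi * u)) := by
  rw [e_eq, Complex.exp_ofReal_mul_I_im]; ring_nf

lemma e_norm (u : ℝ) : ‖e u‖ = 1 := by
  rw [e_eq, Complex.norm_exp_ofReal_mul_I]

lemma e_add (u v : ℝ) : e (u + v) = e u * e v := by
  simp only [e, ← Complex.exp_add]
  congr 1
  push_cast
  ring

lemma e_conj (u : ℝ) : (starRingEnd ℂ) (e u) = e (-u) := by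
  rw [e_eq, e_eq, ← Complex.exp_conj]
  congr 1
  rw [map_mul, Complex.conj_ofReal, Complex.conj_I]
  push_cast
  ring

noncomputable def kh (φ : ℝ) : ℝ := -Real.cos (Real.pi * φ) / (2 * Real.sin (Real.pi * φ))

lemma normSq_e_sub_one (φ : ℝ) :
    Complex.normSq (e φ - 1) = 4 * Real.sin (Real.pi * φ) ^ 2 := by
  have h1 := Real.sin_sq_add_cos_sq (Real.pi * φ)
  have h2 := Real.cos_two_mul (Real.pi * φ)
  have h3 := Real.sin_sq_add_cos_sq (2 * (Real.pi * φ))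
  rw [Complex.normSq_apply, Complex.sub_re, Complex.sub_im, e_re, e_im]
  simp only [Complex.one_re, Complex.one_im]
  nlinarith

lemma e_sub_one_ne {φ : ℝ} (hs : Real.sin (Real.pi * φ) ≠ 0) : e φ - 1 ≠ 0 := by
  intro h
  apply hs
  have h2 := normSq_e_sub_one φ
  rw [h] at h2
  simp at h2
  nlinarith

lemma kc_eq {φ : ℝ} (hs : Real.sin (Real.pi * φ) ≠ 0) :
    (e φ - 1)⁻¹ = -(1/2 : ℂ) + (kh φ : ℝ) * Complex.I := by
  apply inv_eq_of_mul_eq_one_right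
  have h1 := Real.sin_sq_add_cos_sq (Real.pi * φ)
  have hsin2 : Real.sin (2 * (Real.pi * φ)) = 2 * Real.sin (Real.pi * φ) * Real.cos (Real.pi * φ) :=
    Real.sin_two_mul _
  have hcos2 := Real.cos_two_mul (Real.pi * φ)
  have hz : (-(1/2 : ℂ) + (kh φ : ℝ) * Complex.I).re = -(1/2) ∧
      (-(1/2 : ℂ) + (kh φ : ℝ) * Complex.I).im = kh φ := by
    constructor <;> simp
  apply Complex.ext
  · rw [Complex.mul_re, Complex.sub_re, Complex.sub_im, e_re, e_im, hz.1, hz.2]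
    simp only [Complex.one_re, Complex.one_im]
    rw [kh]
    field_simp
    rw [show 2 * Real.pi * φ = 2 * (Real.pi * φ) by ring, hcos2, hsin2]
    ring
  · rw [Complex.mul_im, Complex.sub_re, Complex.sub_im, e_re, e_im, hz.1, hz.2]
    simp only [Complex.one_re, Complex.one_im]
    rw [kh]
    field_simp
    rw [show 2 * Real.pi * φ = 2 * (Real.pi * φ) by ring, hcos2, hsin2]
    linear_combination (-2*Real.cos (Real.pi*φ)) * h1

lemma sin_lb {lam φ : ℝ} (hl : 0 < lam) (h1 : lam ≤ φ) (h2 : φ ≤ 1 - lam) :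
    2 * lam ≤ Real.sin (Real.pi * φ) := by
  have hpi := Real.pi_pos
  rcases le_or_gt φ (1/2) with h | h
  · have := Real.mul_le_sin (x := Real.pi * φ) (by nlinarith) (by nlinarith)
    have hne : Real.pi ≠ 0 := ne_of_gt hpi
    calc 2 * lam ≤ 2 * φ := by nlinarith
    _ = 2 / Real.pi * (Real.pi * φ) := by field_simp
    _ ≤ _ := this
  · have heq : Real.sin (Real.pi * φ) = Real.sin (Real.pi * (1 - φ)) := by
      rw [show Real.pi * (1 - φ) = Real.pi - Real.pi * φ by ring, Real.sin_pi_sub]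
    rw [heq]
    have := Real.mul_le_sin (x := Real.pi * (1 - φ)) (by nlinarith) (by nlinarith)
    have hne : Real.pi ≠ 0 := ne_of_gt hpi
    calc 2 * lam ≤ 2 * (1 - φ) := by nlinarith
    _ = 2 / Real.pi * (Real.pi * (1 - φ)) := by field_simp
    _ ≤ _ := this

lemma norm_kc_le {lam φ : ℝ} (hl : 0 < lam) (h1 : lam ≤ φ) (h2 : φ ≤ 1 - lam) :
    ‖(e φ - 1)⁻¹‖ ≤ 1 / (4 * lam) := by
  have hsin : 2 * lam ≤ Real.sin (Real.pi * φ) := sin_lb hl h1 h2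
  have hn : ‖e φ - 1‖ = 2 * |Real.sin (Real.pi * φ)| := by
    rw [Complex.norm_def, normSq_e_sub_one]
    rw [show (4 : ℝ) * Real.sin (Real.pi * φ)^2 = (2 * |Real.sin (Real.pi * φ)|)^2 by
      rw [mul_pow, _root_.sq_abs]; ring]
    exact Real.sqrt_sq (by positivity)
  rw [norm_inv, hn, _root_.abs_of_nonneg (by linarith : (0:ℝ) ≤ Real.sin (Real.pi * φ))]
  rw [inv_eq_one_div, div_le_div_iff₀ (by linarith) (by positivity)]
  nlinarith

lemma abs_kh_le {lam φ : ℝ} (hl : 0 < lam) (h1 : lam ≤ φ) (h2 : φ ≤ 1 - lam) :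
    |kh φ| ≤ 1 / (4 * lam) := by
  have hsin : 2 * lam ≤ Real.sin (Real.pi * φ) := sin_lb hl h1 h2
  have hcos : |Real.cos (Real.pi * φ)| ≤ 1 := Real.abs_cos_le_one _
  rw [kh, abs_div, abs_neg]
  rw [_root_.abs_of_nonneg (by linarith : (0:ℝ) ≤ 2 * Real.sin (Real.pi * φ))]
  rw [div_le_div_iff₀ (by linarith) (by positivity)]
  nlinarith

lemma abel_ident (a : ℕ) (f G : ℕ → ℂ) : ∀ b, a ≤ b →
    ∑ n ∈ Finset.Ico a b, f n * (G (n+1) - G n)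
      = f b * G b - f a * G a - ∑ n ∈ Finset.Ico a b, (f (n+1) - f n) * G (n+1) := by
  intro b hb
  induction b, hb using Nat.le_induction with
  | base => simp
  | succ b hb ih =>
      rw [Finset.sum_Ico_succ_top (by omega), Finset.sum_Ico_succ_top (by omega), ih]
      ring

lemma tele_mono (a : ℕ) (v : ℕ → ℝ) (hv : ∀ m n, a ≤ m → m ≤ n → v m ≤ v n) : ∀ b, a ≤ b →
    ∑ n ∈ Finset.Ico a b, |v (n+1) - v n| = v b - v a := by
  intro b hb
  induction b, hb using Nat.le_induction with
  | base => simp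
  | succ b hb ih =>
      rw [Finset.sum_Ico_succ_top (by omega), ih]
      rw [_root_.abs_of_nonneg (by linarith [hv b (b+1) hb (by omega)])]
      ring

lemma tele_abs (a : ℕ) (v : ℕ → ℝ)
    (hv : (∀ m n, a ≤ m → m ≤ n → v m ≤ v n) ∨ (∀ m n, a ≤ m → m ≤ n → v n ≤ v m)) :
    ∀ b, a ≤ b → ∑ n ∈ Finset.Ico a b, |v (n+1) - v n| ≤ |v b| + |v a| := by
  intro b hb
  rcases hv with h | h
  · rw [tele_mono a v h b hb]
    have := abs_le.mp (le_refl |v b|)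
    cases abs_cases (v b) <;> cases abs_cases (v a) <;> linarith [abs_nonneg (v b), abs_nonneg (v a), le_abs_self (v b), neg_abs_le (v a)]
  · have : ∑ n ∈ Finset.Ico a b, |v (n+1) - v n| = (-v) b - (-v) a := by
      rw [← tele_mono a (-v) (fun m n hm hmn => by simpa using h m n hm hmn) b hb]
      apply Finset.sum_congr rfl
      intro n _
      simp only [Pi.neg_apply]
      rw [abs_sub_comm]
      congr 1
      ring
    rw [this]
    simp only [Pi.neg_apply]
    linarith [le_abs_self (v a), neg_abs_le (v b)]

lemma kh_mono {lam x y : ℝ} (hl : 0 < lam) (hx1 : lam ≤ x) (hx2 : x ≤ 1 - lam)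
    (hy1 : lam ≤ y) (hy2 : y ≤ 1 - lam) (hxy : x ≤ y) : kh x ≤ kh y := by
  have hsx : 2 * lam ≤ Real.sin (Real.pi * x) := sin_lb hl hx1 hx2
  have hsy : 2 * lam ≤ Real.sin (Real.pi * y) := sin_lb hl hy1 hy2
  have hpi := Real.pi_pos
  have hs : 0 ≤ Real.sin (Real.pi * y - Real.pi * x) := by
    apply Real.sin_nonneg_of_nonneg_of_le_pi (by nlinarith)
    nlinarith
  rw [Real.sin_sub] at hs
  rw [kh, kh, div_le_div_iff₀ (by linarith) (by linarith)]
  nlinarith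

lemma KL (a : ℕ) (g : ℕ → ℝ) (lam : ℝ) (hl : 0 < lam)
    (hφ : ∀ n, a ≤ n → lam ≤ g (n+1) - g n ∧ g (n+1) - g n ≤ 1 - lam)
    (hmono : (∀ m n, a ≤ m → m ≤ n → g (m+1) - g m ≤ g (n+1) - g n) ∨
             (∀ m n, a ≤ m → m ≤ n → g (n+1) - g n ≤ g (m+1) - g m))
    (b : ℕ) : ‖∑ n ∈ Finset.Ico a b, e (g n)‖ ≤ 1 / lam := by
  rcases le_or_gt b a with hba | hab
  · rw [Finset.Ico_eq_empty (by omega)]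
    simp
    positivity
  have hab : a ≤ b := le_of_lt hab
  set φ : ℕ → ℝ := fun n => g (n+1) - g n with hφdef
  have hsin : ∀ n, a ≤ n → 2 * lam ≤ Real.sin (Real.pi * φ n) := fun n hn =>
    sin_lb hl (hφ n hn).1 (hφ n hn).2
  have hsne : ∀ n, a ≤ n → Real.sin (Real.pi * φ n) ≠ 0 := fun n hn =>
    ne_of_gt (lt_of_lt_of_le (by linarith) (hsin n hn))
  set f : ℕ → ℂ := fun n => (e (φ n) - 1)⁻¹ with hfdef
  set G : ℕ → ℂ := fun n => e (g n) with hGdef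
  have key : ∀ n, a ≤ n → e (g n) = f n * (G (n+1) - G n) := by
    intro n hn
    have h1 : G (n+1) = G n * e (φ n) := by
      rw [hGdef]
      simp only
      rw [← e_add]
      congr 1
      simp [hφdef]
    rw [h1, hfdef]
    simp only
    have hne : e (φ n) - 1 ≠ 0 := e_sub_one_ne (hsne n hn)
    field_simp [hGdef]
    ring
  rw [Finset.sum_congr rfl (fun n hn => key n (Finset.mem_Ico.mp hn).1)]
  rw [abel_ident a f G b hab]
  have hnorm_f : ∀ n, a ≤ n → ‖f n‖ ≤ 1 / (4 * lam) := fun n hn =>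
    norm_kc_le hl (hφ n hn).1 (hφ n hn).2
  have hG1 : ∀ n, ‖G n‖ = 1 := fun n => e_norm _
  have hdiff : ∀ n, a ≤ n → ‖f (n+1) - f n‖ = |kh (φ (n+1)) - kh (φ n)| := by
    intro n hn
    rw [hfdef]
    simp only
    rw [kc_eq (hsne (n+1) (by omega)), kc_eq (hsne n hn)]
    rw [show -(1/2 : ℂ) + (kh (φ (n+1)) : ℝ) * Complex.I - (-(1/2 : ℂ) + (kh (φ n) : ℝ) * Complex.I)
        = ((kh (φ (n+1)) - kh (φ n) : ℝ) : ℂ) * Complex.I by push_cast; ring]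
    rw [norm_mul, Complex.norm_real, Complex.norm_I, mul_one, Real.norm_eq_abs]
  have hv : (∀ m n, a ≤ m → m ≤ n → kh (φ m) ≤ kh (φ n)) ∨
            (∀ m n, a ≤ m → m ≤ n → kh (φ n) ≤ kh (φ m)) := by
    rcases hmono with h | h
    · left
      intro m n hm hmn
      exact kh_mono hl (hφ m hm).1 (hφ m hm).2 (hφ n (le_trans hm hmn)).1
        (hφ n (le_trans hm hmn)).2 (h m n hm hmn)
    · right
      intro m n hm hmn
      exact kh_mono hl (hφ n (le_trans hm hmn)).1 (hφ n (le_trans hm hmn)).2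
        (hφ m hm).1 (hφ m hm).2 (h m n hm hmn)
  have hsum : ∑ n ∈ Finset.Ico a b, ‖(f (n+1) - f n) * G (n+1)‖ ≤ 2 * (1 / (4 * lam)) := by
    calc ∑ n ∈ Finset.Ico a b, ‖(f (n+1) - f n) * G (n+1)‖
        = ∑ n ∈ Finset.Ico a b, |kh (φ (n+1)) - kh (φ n)| := by
          apply Finset.sum_congr rfl
          intro n hn
          rw [norm_mul, hG1, mul_one, hdiff n (Finset.mem_Ico.mp hn).1]
      _ ≤ |kh (φ b)| + |kh (φ a)| := tele_abs a (fun n => kh (φ n)) hv b hab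
      _ ≤ 1 / (4 * lam) + 1 / (4 * lam) :=
          add_le_add (abs_kh_le hl (hφ b hab).1 (hφ b hab).2)
            (abs_kh_le hl (hφ a le_rfl).1 (hφ a le_rfl).2)
      _ = 2 * (1 / (4 * lam)) := by ring
  calc ‖f b * G b - f a * G a - ∑ n ∈ Finset.Ico a b, (f (n+1) - f n) * G (n+1)‖
      ≤ ‖f b * G b‖ + ‖f a * G a‖ + ‖∑ n ∈ Finset.Ico a b, (f (n+1) - f n) * G (n+1)‖ := by
        have := norm_sub_le (f b * G b - f a * G a) (∑ n ∈ Finset.Ico a b, (f (n+1) - f n) * G (n+1))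
        have h2 := norm_sub_le (f b * G b) (f a * G a)
        linarith
    _ ≤ 1 / (4 * lam) + 1 / (4 * lam) + 2 * (1 / (4 * lam)) := by
        have h1 : ‖f b * G b‖ ≤ 1 / (4 * lam) := by
          rw [norm_mul, hG1, mul_one]; exact hnorm_f b hab
        have h2 : ‖f a * G a‖ ≤ 1 / (4 * lam) := by
          rw [norm_mul, hG1, mul_one]; exact hnorm_f a le_rfl
        have h3 : ‖∑ n ∈ Finset.Ico a b, (f (n+1) - f n) * G (n+1)‖
            ≤ 2 * (1 / (4 * lam)) := le_trans (norm_sum_le _ _) hsum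
        linarith
    _ = 1 / lam := by
        have hne : lam ≠ 0 := ne_of_gt hl
        field_simp
        norm_num

lemma weighted (a b : ℕ) (w : ℕ → ℝ) (E : ℕ → ℂ) (K : ℝ)
    (hw0 : ∀ n, 0 ≤ w n) (hwa : ∀ m n, a ≤ m → m ≤ n → w n ≤ w m)
    (hS : ∀ m, ‖∑ n ∈ Finset.Ico a m, E n‖ ≤ K) :
    ‖∑ n ∈ Finset.Ico a b, (w n : ℂ) * E n‖ ≤ w a * K := by
  have hK : 0 ≤ K := le_trans (norm_nonneg _) (hS a)
  rcases le_or_gt b a with hba | hab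
  · rw [Finset.Ico_eq_empty (by omega)]
    simp
    exact mul_nonneg (hw0 a) hK
  have hab : a ≤ b := le_of_lt hab
  set G : ℕ → ℂ := fun m => ∑ n ∈ Finset.Ico a m, E n with hGdef
  have hGa : G a = 0 := by simp [hGdef]
  have hGK : ∀ m, ‖G m‖ ≤ K := hS
  have key : ∀ n, a ≤ n → (w n : ℂ) * E n = (w n : ℂ) * (G (n+1) - G n) := by
    intro n hn
    congr 1
    rw [hGdef]
    simp only
    rw [Finset.sum_Ico_succ_top hn]
    ring
  rw [Finset.sum_congr rfl (fun n hn => key n (Finset.mem_Ico.mp hn).1)]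
  rw [abel_ident a (fun n => (w n : ℂ)) G b hab]
  have htel : ∑ n ∈ Finset.Ico a b, |w (n+1) - w n| = w a - w b := by
    have := tele_mono a (fun n => -w n) (fun m n hm hmn => by simpa using hwa m n hm hmn) b hab
    rw [show w a - w b = -w b - -w a by ring, ← this]
    apply Finset.sum_congr rfl
    intro n _
    rw [abs_sub_comm]
    congr 1
    ring
  have hsum : ‖∑ n ∈ Finset.Ico a b, (((w (n+1) : ℂ)) - (w n : ℂ)) * G (n+1)‖
      ≤ (w a - w b) * K := by
    calc ‖∑ n ∈ Finset.Ico a b, (((w (n+1) : ℂ)) - (w n : ℂ)) * G (n+1)‖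
        ≤ ∑ n ∈ Finset.Ico a b, ‖(((w (n+1) : ℂ)) - (w n : ℂ)) * G (n+1)‖ := norm_sum_le _ _
      _ ≤ ∑ n ∈ Finset.Ico a b, |w (n+1) - w n| * K := by
          apply Finset.sum_le_sum
          intro n hn
          rw [norm_mul]
          have h1 : ‖((w (n+1) : ℂ)) - (w n : ℂ)‖ = |w (n+1) - w n| := by
            rw [← Complex.ofReal_sub, Complex.norm_real, Real.norm_eq_abs]
          rw [h1]
          exact mul_le_mul_of_nonneg_left (hGK (n+1)) (abs_nonneg _)
      _ = (w a - w b) * K := by rw [← Finset.sum_mul, htel]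
  calc ‖(w b : ℂ) * G b - (w a : ℂ) * G a - ∑ n ∈ Finset.Ico a b, (((w (n+1) : ℂ)) - (w n : ℂ)) * G (n+1)‖
      ≤ ‖(w b : ℂ) * G b‖ + ‖(w a : ℂ) * G a‖ + ‖∑ n ∈ Finset.Ico a b, (((w (n+1) : ℂ)) - (w n : ℂ)) * G (n+1)‖ := by
        have := norm_sub_le ((w b : ℂ) * G b - (w a : ℂ) * G a) (∑ n ∈ Finset.Ico a b, (((w (n+1) : ℂ)) - (w n : ℂ)) * G (n+1))
        have h2 := norm_sub_le ((w b : ℂ) * G b) ((w a : ℂ) * G a)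
        linarith
    _ ≤ w b * K + 0 + (w a - w b) * K := by
        have h1 : ‖(w b : ℂ) * G b‖ ≤ w b * K := by
          rw [norm_mul, Complex.norm_real, Real.norm_eq_abs, _root_.abs_of_nonneg (hw0 b)]
          exact mul_le_mul_of_nonneg_left (hGK b) (hw0 b)
        have h2 : ‖(w a : ℂ) * G a‖ = 0 := by rw [hGa, mul_zero, norm_zero]
        linarith [hsum]
    _ = w a * K := by ring

lemma norm_sum_e_neg (a m : ℕ) (f : ℕ → ℝ) :
    ‖∑ n ∈ Finset.Ico a m, e (f n)‖ = ‖∑ n ∈ Finset.Ico a m, e (-(f n))‖ := by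
  have h : (starRingEnd ℂ) (∑ n ∈ Finset.Ico a m, e (f n)) = ∑ n ∈ Finset.Ico a m, e (-(f n)) := by
    rw [map_sum]
    exact Finset.sum_congr rfl (fun n _ => e_conj (f n))
  rw [← h, RCLike.norm_conj]

lemma core (X₁ γ η : ℝ) (a : ℕ) (hX₁ : 1 ≤ X₁) (haX : X₁ < (a:ℝ))
    (hγ : |γ| ≤ X₁ * |η|) (hη2 : |η| ≤ 1/2) (hη : 0 < η) (m : ℕ) :
    ‖∑ n ∈ Finset.Ico a m, e ((n:ℝ) * η + γ * Real.log n / (2*Real.pi))‖ ≤ 2 / η := by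
  set f : ℕ → ℝ := fun n => (n:ℝ) * η + γ * Real.log n / (2*Real.pi) with hf
  have hpi3 := Real.pi_gt_three
  have hpi0 := Real.pi_pos
  have hXpos : (0:ℝ) < X₁ := by linarith
  have hη' : η ≤ 1/2 := by rw [abs_of_pos hη] at hη2; exact hη2
  have hγ' : |γ| ≤ X₁ * η := by rwa [abs_of_pos hη] at hγ
  have hnpos : ∀ n : ℕ, a ≤ n → (1:ℝ) ≤ (n:ℝ) := by
    intro n hn
    have h1 : (a:ℝ) ≤ n := Nat.cast_le.mpr hn
    linarith
  have hφeq : ∀ n : ℕ, f (n+1) - f n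
      = η + γ * (Real.log ((n:ℝ)+1) - Real.log n) / (2*Real.pi) := by
    intro n
    rw [hf]
    push_cast
    ring
  have hL : ∀ n : ℕ, a ≤ n → 0 ≤ Real.log ((n:ℝ)+1) - Real.log n ∧
      Real.log ((n:ℝ)+1) - Real.log n ≤ 1/X₁ := by
    intro n hn
    have h1 : (1:ℝ) ≤ n := hnpos n hn
    have hna : X₁ < (n:ℝ) := lt_of_lt_of_le haX (Nat.cast_le.mpr hn)
    constructor
    · have := Real.log_le_log (by linarith : (0:ℝ) < (n:ℝ)) (by linarith : (n:ℝ) ≤ (n:ℝ)+1)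
      linarith
    · have hq : Real.log ((n:ℝ)+1) - Real.log n = Real.log (((n:ℝ)+1)/n) := by
        rw [Real.log_div (by linarith) (by linarith)]
      rw [hq]
      have h2 := Real.log_le_sub_one_of_pos (show (0:ℝ) < ((n:ℝ)+1)/n by positivity)
      have heq : ((n:ℝ)+1)/n - 1 = 1/n := by field_simp; ring
      have h3 : (1:ℝ)/n ≤ 1/X₁ := by
        apply one_div_le_one_div_of_le hXpos (le_of_lt hna)
      linarith
  have hγterm : ∀ n : ℕ, a ≤ n →
      |γ * (Real.log ((n:ℝ)+1) - Real.log n) / (2*Real.pi)| ≤ η/6 := by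
    intro n hn
    obtain ⟨hL0, hL1⟩ := hL n hn
    rw [abs_div, abs_mul, _root_.abs_of_pos (by linarith : (0:ℝ) < 2*Real.pi),
      div_le_iff₀ (by linarith)]
    rw [_root_.abs_of_nonneg hL0]
    have hmul : |γ| * (Real.log ((n:ℝ)+1) - Real.log n) ≤ (X₁ * η) * (1/X₁) := by
      apply mul_le_mul hγ' hL1 hL0 (by positivity)
    have hid : (X₁ * η) * (1/X₁) = η := by field_simp
    nlinarith
  have hφb : ∀ n : ℕ, a ≤ n → η/2 ≤ f (n+1) - f n ∧ f (n+1) - f n ≤ 1 - η/2 := by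
    intro n hn
    have h1 := hγterm n hn
    have h2 := abs_le.mp h1
    rw [hφeq]
    constructor
    · linarith [h2.1]
    · linarith [h2.2]
  have hLmono : ∀ m' n' : ℕ, a ≤ m' → m' ≤ n' →
      Real.log ((n':ℝ)+1) - Real.log n' ≤ Real.log ((m':ℝ)+1) - Real.log m' := by
    intro m' n' hm hmn
    have h1 : (1:ℝ) ≤ m' := hnpos m' hm
    have h2 : (m':ℝ) ≤ n' := Nat.cast_le.mpr hmn
    have hqm : Real.log ((m':ℝ)+1) - Real.log m' = Real.log (((m':ℝ)+1)/m') := by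
      rw [Real.log_div (by linarith) (by linarith)]
    have hqn : Real.log ((n':ℝ)+1) - Real.log n' = Real.log (((n':ℝ)+1)/n') := by
      rw [Real.log_div (by linarith) (by linarith)]
    rw [hqm, hqn]
    apply Real.log_le_log (by apply div_pos <;> linarith)
    rw [div_le_div_iff₀ (by linarith) (by linarith)]
    nlinarith
  have hmono : (∀ m' n' : ℕ, a ≤ m' → m' ≤ n' → f (m'+1) - f m' ≤ f (n'+1) - f n') ∨
      (∀ m' n' : ℕ, a ≤ m' → m' ≤ n' → f (n'+1) - f n' ≤ f (m'+1) - f m') := by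
    rcases le_or_gt 0 γ with hg | hg
    · right
      intro m' n' hm hmn
      rw [hφeq, hφeq]
      have := hLmono m' n' hm hmn
      have h3 : γ * (Real.log ((n':ℝ)+1) - Real.log n') ≤ γ * (Real.log ((m':ℝ)+1) - Real.log m') :=
        mul_le_mul_of_nonneg_left this hg
      have h4 : (0:ℝ) < 2*Real.pi := by linarith
      have h5 : γ * (Real.log ((n':ℝ)+1) - Real.log n') / (2*Real.pi)
          ≤ γ * (Real.log ((m':ℝ)+1) - Real.log m') / (2*Real.pi) := by
        rw [div_le_div_iff₀ h4 h4]
        nlinarith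
      linarith
    · left
      intro m' n' hm hmn
      rw [hφeq, hφeq]
      have := hLmono m' n' hm hmn
      have h3 : γ * (Real.log ((m':ℝ)+1) - Real.log m') ≤ γ * (Real.log ((n':ℝ)+1) - Real.log n') := by
        nlinarith
      have h4 : (0:ℝ) < 2*Real.pi := by linarith
      have h5 : γ * (Real.log ((m':ℝ)+1) - Real.log m') / (2*Real.pi)
          ≤ γ * (Real.log ((n':ℝ)+1) - Real.log n') / (2*Real.pi) := by
        rw [div_le_div_iff₀ h4 h4]
        nlinarith
      linarith
  have hKL := KL a f (η/2) (by linarith) hφb hmono m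
  have heq : 1/(η/2) = 2/η := by
    field_simp
  rw [heq] at hKL
  exact hKL

/-- For ρ = 1−δ+iγ with 0 ≤ δ ≤ 1, X₁ ≥ 1 and |γ|/X₁ ≤ |η| ≤ 1/2 (η ≠ 0),
T_ρ(η) = Σ_{X₁<n≤X} n^{ρ−1} e(nη) satisfies |T_ρ(η)| ≪ X₁^{-δ}|η|^{-1},
with an absolute implied constant. -/
theorem T_rho_bound :
    ∃ C : ℝ, ∀ (X X₁ δ γ η : ℝ), 0 ≤ δ → δ ≤ 1 → 1 ≤ X₁ →
      |γ| / X₁ ≤ |η| → |η| ≤ 1 / 2 → η ≠ 0 →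
      ‖∑ n ∈ Finset.Ioc ⌊X₁⌋₊ ⌊X⌋₊,
          (n : ℂ) ^ ((((1 - δ : ℝ) : ℂ) + γ * Complex.I) - 1) * e (n * η)‖ ≤
        C * X₁ ^ (-δ) / |η| := by
  use 2
  intro X X₁ δ γ η hδ0 hδ1 hX₁ hγη hη2 hη0
  have hXpos : (0:ℝ) < X₁ := by linarith
  have hγ : |γ| ≤ X₁ * |η| := by
    rw [div_le_iff₀ hXpos] at hγη
    linarith
  have hηabs : 0 < |η| := abs_pos.mpr hη0
  have hIoc : Finset.Ioc ⌊X₁⌋₊ ⌊X⌋₊ = Finset.Ico (⌊X₁⌋₊+1) (⌊X⌋₊+1) := by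
    ext n
    simp only [Finset.mem_Ioc, Finset.mem_Ico]
    omega
  set A := ⌊X₁⌋₊ with hA
  have hA1 : 1 ≤ A := Nat.le_floor (by exact_mod_cast hX₁)
  have haX : X₁ < ((A+1 : ℕ):ℝ) := by
    push_cast
    exact Nat.lt_floor_add_one X₁
  set f : ℕ → ℝ := fun n => (n:ℝ) * η + γ * Real.log n / (2*Real.pi) with hf
  set w : ℕ → ℝ := fun n => (n:ℝ) ^ (-δ) with hw
  have hpi0 := Real.pi_pos
  have hterm : ∀ n ∈ Finset.Ico (A+1) (⌊X⌋₊+1),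
      (n : ℂ) ^ ((((1 - δ : ℝ) : ℂ) + γ * Complex.I) - 1) * e (n * η)
        = (w n : ℂ) * e (f n) := by
    intro n hn
    have hn1 : A+1 ≤ n := (Finset.mem_Ico.mp hn).1
    have hnR : (1:ℝ) ≤ (n:ℝ) := by
      have : ((A+1:ℕ):ℝ) ≤ (n:ℝ) := Nat.cast_le.mpr hn1
      linarith
    have hne : (n:ℂ) ≠ 0 := Nat.cast_ne_zero.mpr (by omega)
    have hexp : (((1 - δ:ℝ):ℂ) + γ * Complex.I) - 1 = ((-δ:ℝ):ℂ) + (γ:ℂ) * Complex.I := by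
      push_cast
      ring
    rw [hexp, Complex.cpow_add _ _ hne]
    have hcast : ((n:ℕ):ℂ) = (((n:ℝ)):ℂ) := by push_cast; rfl
    have h1 : (n:ℂ) ^ (((-δ:ℝ)):ℂ) = ((w n : ℝ):ℂ) := by
      rw [hw, hcast, ← Complex.ofReal_cpow (by linarith : (0:ℝ) ≤ (n:ℝ))]
    have h3 : (n:ℂ) ^ ((γ:ℂ) * Complex.I) = e (γ * Real.log n / (2*Real.pi)) := by
      rw [Complex.cpow_def_of_ne_zero hne, e_eq]
      congr 1
      have hlog : Complex.log (n:ℂ) = ((Real.log (n:ℝ) : ℝ) : ℂ) := by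
        rw [hcast, Complex.ofReal_log (by linarith : (0:ℝ) ≤ (n:ℝ))]
      rw [hlog]
      push_cast
      have hpine : (Real.pi : ℂ) ≠ 0 := by
        exact_mod_cast ne_of_gt hpi0
      field_simp
    have h4 : e (f n) = e ((n:ℝ) * η) * e (γ * Real.log n / (2*Real.pi)) := by
      rw [hf]
      simp only
      rw [e_add]
    rw [h1, h3, h4]
    ring
  rw [hIoc, Finset.sum_congr rfl hterm]
  have hS : ∀ m, ‖∑ n ∈ Finset.Ico (A+1) m, e (f n)‖ ≤ 2/|η| := by
    intro m
    rcases lt_trichotomy η 0 with hneg | hzero | hpos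
    · rw [norm_sum_e_neg]
      have hfeq : ∀ n ∈ Finset.Ico (A+1) m, e (-(f n))
          = e ((n:ℝ) * (-η) + (-γ) * Real.log n / (2*Real.pi)) := by
        intro n _
        congr 1
        rw [hf]
        ring
      rw [Finset.sum_congr rfl hfeq]
      have := core X₁ (-γ) (-η) (A+1) hX₁ haX (by rwa [abs_neg, abs_neg])
        (by rwa [abs_neg]) (by linarith) m
      rwa [abs_of_neg hneg]
    · exact absurd hzero hη0
    · have := core X₁ γ η (A+1) hX₁ haX hγ hη2 hpos m
      rwa [abs_of_pos hpos]
  have hw0 : ∀ n, 0 ≤ w n := fun n => Real.rpow_nonneg (Nat.cast_nonneg n) _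
  have hwa : ∀ m n, A+1 ≤ m → m ≤ n → w n ≤ w m := by
    intro m n hm hmn
    rw [hw]
    simp only
    apply Real.rpow_le_rpow_of_nonpos
    · exact_mod_cast Nat.pos_of_ne_zero (by omega)
    · exact_mod_cast hmn
    · linarith
  have hweighted := weighted (A+1) (⌊X⌋₊+1) w (fun n => e (f n)) (2/|η|) hw0 hwa hS
  have hwA : w (A+1) ≤ X₁ ^ (-δ) :=
    Real.rpow_le_rpow_of_nonpos hXpos (le_of_lt haX) (by linarith)
  calc ‖∑ n ∈ Finset.Ico (A+1) (⌊X⌋₊+1), (w n : ℂ) * e (f n)‖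
      ≤ w (A+1) * (2/|η|) := hweighted
    _ ≤ X₁ ^ (-δ) * (2/|η|) := by
        apply mul_le_mul_of_nonneg_right hwA (by positivity)
    _ = 2 * X₁ ^ (-δ) / |η| := by ring
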